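/- For every b ∈ {0,…,n-2} with b ≠ a, and every m ≥ 0, the Sylvester number y_b divides λ_2^(m,a) - 1. -/

import Mathlib

/-- `QDvd d q` means the rational number `q` is `d` times an integer. -/
def QDvd (d : ℕ) (q : ℚ) : Prop := ∃ c : ℤ, q = (d : ℚ) * c

theorem lambda_two_minus_one_divisible
    (n a : ℕ) (hn : 4 ≤ n) (ha : a ≤ n - 2)
    (y : ℕ → ℕ)
    (hy0 : y 0 = 2)
    (hy : ∀ m, 1 ≤ m → y m = 1 + ∏ i ∈ Finset.range m, y i)
    (k : ℕ → ℕ)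
    (hk : Set.BijOn k (Set.Icc 3 n) (Set.Iic (n - 2) \ {a}))
    (L : ℕ → ℕ → ℚ)
    (hL00 : L 0 0 = 1)
    (hL01 : L 0 1 = 2 * ((y (n - 1) : ℚ) - 1) / (y a : ℚ))
    (hL02 : L 0 2 = 1)
    (hL0i : ∀ i, 3 ≤ i → i ≤ n → L 0 i = 2 * ((y (n - 1) : ℚ) - 1) / (y (k i) : ℚ))
    (hR0 : ∀ m, L (m + 1) 0 = L m 2)
    (hR1 : ∀ m, L (m + 1) 1 = L m 1)
    (hR2 : ∀ m, L (m + 1) 2 = (L m 1 + L m 2) ^ 2 / L m 0)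
    (hRi : ∀ m i, 3 ≤ i → i ≤ n → L (m + 1) i = L m i * (L m 1 + L m 2) / L m 0)
    : ∀ b, b ≤ n - 2 → b ≠ a → ∀ m, QDvd (y b) (L m 2 - 1) := by
  intro b hb hba m
  have ypos : ∀ i, 0 < y i := by
    intro i
    rcases Nat.eq_zero_or_pos i with h | h
    · simp [h, hy0]
    · rw [hy i h]; omega
  -- L m 1 is constant
  have const1 : ∀ m, L m 1 = L 0 1 := by
    intro m; induction m with
    | zero => rfl
    | succ j ih => rw [hR1, ih]
  -- divisibility of the product by y a * y b
  have hn1 : 1 ≤ n - 1 := by omega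
  have hprod : y (n-1) = 1 + ∏ i ∈ Finset.range (n-1), y i := hy _ hn1
  have hsub : ({a, b} : Finset ℕ) ⊆ Finset.range (n-1) := by
    intro x hx
    simp only [Finset.mem_insert, Finset.mem_singleton] at hx
    rcases hx with h | h <;> simp only [Finset.mem_range] <;> omega
  have hdvd : y a * y b ∣ ∏ i ∈ Finset.range (n-1), y i := by
    have h := Finset.prod_dvd_prod_of_subset ({a, b} : Finset ℕ) (Finset.range (n-1)) y hsub
    rwa [Finset.prod_pair (Ne.symm hba)] at h
  obtain ⟨M, hM⟩ := hdvd
  have hya : (y a : ℚ) ≠ 0 := by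
    exact_mod_cast (ypos a).ne'
  -- A := L 0 1 is y b times an integer
  have hcA : L 0 1 = (y b : ℚ) * ((2 * M : ℤ) : ℚ) := by
    have h1 : ((y (n-1) : ℚ)) - 1 = ((y a : ℚ)) * ((y b : ℚ)) * (M : ℚ) := by
      rw [hprod, hM]; push_cast; ring
    rw [hL01, h1]
    field_simp
    push_cast
    ring
  -- A is nonnegative
  have hAnn : 0 ≤ L 0 1 := by
    rw [hL01]
    apply div_nonneg
    · have h1 : 1 ≤ y (n-1) := ypos _
      have : (1:ℚ) ≤ (y (n-1) : ℚ) := by exact_mod_cast h1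
      linarith
    · positivity
  -- positivity of L m 0 and L m 2
  have pos : ∀ m, 0 < L m 0 ∧ 0 < L m 2 := by
    intro m; induction m with
    | zero => rw [hL00, hL02]; norm_num
    | succ j ih =>
      obtain ⟨h0, h2⟩ := ih
      refine ⟨by rw [hR0]; exact h2, ?_⟩
      rw [hR2, const1]
      have hnum : 0 < L 0 1 + L j 2 := by linarith
      positivity
  -- the linear recurrence
  have lin : ∀ m, L (m+1) 2 =
      ((L 0 1)^2 + 4*(L 0 1) + 2) * L m 2 - L m 0 - 2 * (L 0 1) := by
    intro m; induction m with
    | zero =>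
      rw [hR2, hL00, hL02]
      ring
    | succ j ih =>
      have h0 := (pos j).1
      have h2 := (pos j).2
      have key : L (j+1) 2 * L j 0 = (L 0 1 + L j 2)^2 := by
        rw [hR2, const1, div_mul_cancel₀ _ h0.ne']
      rw [hR2 (j+1), const1, hR0]
      rw [div_eq_iff h2.ne']
      rw [ih] at key ⊢
      linear_combination -key
  -- main induction mod y b
  have main : ∀ m, (∃ c : ℤ, L m 2 = 1 + (y b : ℚ) * c) ∧
      (∃ c : ℤ, L (m+1) 2 = 1 + (y b : ℚ) * c) := by
    intro m; induction m with
    | zero =>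
      refine ⟨⟨0, by rw [hL02]; push_cast; ring⟩, ?_⟩
      refine ⟨(y b : ℤ) * (2*M)^2 + 2 * (2*M), ?_⟩
      rw [lin 0, hL02, hL00, hcA]
      push_cast
      ring
    | succ j ih =>
      obtain ⟨⟨c1, h1⟩, ⟨c2, h2⟩⟩ := ih
      refine ⟨⟨c2, h2⟩, ?_⟩
      refine ⟨(y b : ℤ) * (2*M)^2 + 2 * (2*M)
        + ((y b : ℤ)^2 * (2*M)^2 + 4 * (y b : ℤ) * (2*M) + 2) * c2 - c1, ?_⟩
      rw [lin (j+1), hR0, h1, h2, hcA]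
      push_cast
      ring
  obtain ⟨c, hc⟩ := (main m).1
  exact ⟨c, by rw [hc]; ring⟩
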